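/- Let K be a field and V a finite-dimensional K-vector space of even dimension 2m, equipped with an alternating bilinear form Ω. If Ω is nondegenerate, then the m-th wedge power Ω^{∧m} ∈ Λ^{2m}(V^*) is nonzero; conversely if Ω^{∧m} ≠ 0 then Ω is nondegenerate. -/

import Mathlib

set_option synthInstance.maxHeartbeats 400000
set_option maxHeartbeats 1000000

open TensorProduct

/-- The element of the exterior algebra of the dual space associated to a bilinear form `B`
on a finite-dimensional space: writing `B = ∑ fᵢ ⊗ gᵢ ∈ V* ⊗ V*`, it is `∑ fᵢ ∧ gᵢ`. -/
noncomputable def bilinToExterior {K V : Type*} [Field K] [AddCommGroup V] [Module K V]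
    [FiniteDimensional K V] (B : LinearMap.BilinForm K V) :
    ExteriorAlgebra K (Module.Dual K V) :=
  TensorProduct.lift
    ((LinearMap.mul K (ExteriorAlgebra K (Module.Dual K V))).compl₁₂
      (ExteriorAlgebra.ι K) (ExteriorAlgebra.ι K))
    ((dualTensorHomEquiv K V (Module.Dual K V)).symm B)

section listaux
variable {A : Type*} [AddCommMonoid A]
lemma finset_range_sum_eq_list (f : ℕ → A) (m : ℕ) :
    ∑ k ∈ Finset.range m, f k = ((List.range m).map f).sum := by
  induction m with
  | zero => simp
  | succ m ih =>
    rw [Finset.sum_range_succ, List.range_succ, List.map_append, List.sum_append, ih]; simp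
end listaux

section ListLemmas
variable {A : Type*} [Ring A]

lemma mul_list_sum_eq_zero (p : A) (t : List A) (h : ∀ y ∈ t, p * y = 0) : p * t.sum = 0 := by
  induction t with
  | nil => simp
  | cons b s ih =>
    rw [List.sum_cons, mul_add, h b (by simp), ih (fun y hy => h y (by simp [hy])), add_zero]

lemma list_prod_mul_mem_eq_zero (L : List A) (hc : ∀ x ∈ L, ∀ y ∈ L, Commute x y)
    (hs : ∀ x ∈ L, x * x = 0) {a : A} (ha : a ∈ L) : L.prod * a = 0 := by
  induction L with
  | nil => simp at ha
  | cons b t ih =>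
    rw [List.prod_cons]
    rcases List.mem_cons.mp ha with rfl | hat
    · have hbt : Commute a t.prod :=
        Commute.list_prod_right _ _ (fun y hy => hc a (by simp) y (by simp [hy]))
      rw [mul_assoc, ← hbt.eq, ← mul_assoc, hs a (by simp), zero_mul]
    · rw [mul_assoc, ih (fun x hx y hy => hc x (by simp [hx]) y (by simp [hy]))
        (fun x hx => hs x (by simp [hx])) hat, mul_zero]

lemma list_sum_pow_length (L : List A) (hc : ∀ x ∈ L, ∀ y ∈ L, Commute x y)
    (hs : ∀ x ∈ L, x * x = 0) : L.sum ^ L.length = L.length.factorial • L.prod := by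
  induction L with
  | nil => simp
  | cons a t ih =>
    have hct : ∀ x ∈ t, ∀ y ∈ t, Commute x y := fun x hx y hy =>
      hc x (by simp [hx]) y (by simp [hy])
    have hst : ∀ x ∈ t, x * x = 0 := fun x hx => hs x (by simp [hx])
    have haa : a * a = 0 := hs a (by simp)
    have hcomm : Commute a t.sum :=
      Commute.list_sum_right _ _ (fun y hy => hc a (by simp) y (by simp [hy]))
    rw [List.sum_cons, List.length_cons, List.prod_cons]
    rw [hcomm.add_pow]
    rw [Finset.sum_eq_single_of_mem 1 (by simp)]
    · rw [pow_one, Nat.add_sub_cancel, ih hct hst, Nat.choose_one_right,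
        mul_smul_comm, smul_mul_assoc, ← nsmul_eq_mul', smul_smul, Nat.factorial_succ,
        Nat.mul_comm]
    · intro k hk hk1
      rcases k with _ | _ | k
      · have hz : ∀ y ∈ t, t.prod * y = 0 := fun y hy => list_prod_mul_mem_eq_zero t hct hst hy
        rw [pow_zero, one_mul, Nat.sub_zero, Nat.choose_zero_right, Nat.cast_one, mul_one,
          pow_succ, ih hct hst, smul_mul_assoc, mul_list_sum_eq_zero _ _ hz, smul_zero]
      · exact absurd rfl hk1
      · have : a ^ (k + 2) = 0 := by
          rw [pow_add, pow_two, haa, mul_zero]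
        rw [this, zero_mul, zero_mul]
end ListLemmas

section PairProd
variable {A : Type*} [Monoid A]

lemma list_prod_pairs (g : ℕ → A) (m : ℕ) :
    ((List.range m).map (fun k => g (2*k) * g (2*k+1))).prod
      = (List.ofFn (fun i : Fin (2*m) => g i.val)).prod := by
  induction m with
  | zero => simp
  | succ m ih =>
    rw [List.range_succ, List.map_append, List.prod_append, ih]
    have h1 : (List.ofFn (fun i : Fin (2*(m+1)) => g i.val))
        = (List.ofFn (fun i : Fin (2*m+1) => g i.val)).concat (g (2*m+1)) := by
      exact List.ofFn_succ' (fun i : Fin (2*m+1+1) => g i.val)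
    have h2 : (List.ofFn (fun i : Fin (2*m+1) => g i.val))
        = (List.ofFn (fun i : Fin (2*m) => g i.val)).concat (g (2*m)) := by
      exact List.ofFn_succ' (fun i : Fin (2*m+1) => g i.val)
    rw [h1, h2]
    simp [List.prod_concat, mul_assoc]

end PairProd

section ExtAnti
variable {K : Type*} [CommRing K] {W : Type*} [AddCommGroup W] [Module K W]

open ExteriorAlgebra

lemma ι_anticomm (x y : W) : ι K x * ι K y = -(ι K y * ι K x) :=
  eq_neg_of_add_eq_zero_left (ι_add_mul_swap x y)

lemma ι_single_pair_comm (z x y : W) :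
    ι K z * (ι K x * ι K y) = (ι K x * ι K y) * ι K z := by
  rw [← mul_assoc, ι_anticomm z x, neg_mul, mul_assoc, ι_anticomm z y, mul_neg, neg_neg,
    ← mul_assoc]

lemma ι_pair_commute (a b x y : W) : Commute (ι K a * ι K b) (ι K x * ι K y) := by
  show _ = _
  rw [mul_assoc, ι_single_pair_comm b x y, ← mul_assoc, ι_single_pair_comm a x y, mul_assoc]

lemma ι_pair_sq (a b : W) : (ι K a * ι K b) * (ι K a * ι K b) = 0 := by
  rw [mul_assoc, ← mul_assoc (ι K b), ι_anticomm b a, neg_mul, mul_assoc, ι_sq_zero, mul_zero,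
    neg_zero, mul_zero]

end ExtAnti

section BTE1
variable {K V : Type*} [Field K] [AddCommGroup V] [Module K V] [FiniteDimensional K V]

noncomputable def bteL : LinearMap.BilinForm K V →ₗ[K] ExteriorAlgebra K (Module.Dual K V) :=
  (TensorProduct.lift
    ((LinearMap.mul K (ExteriorAlgebra K (Module.Dual K V))).compl₁₂
      (ExteriorAlgebra.ι K) (ExteriorAlgebra.ι K))).comp
    ((dualTensorHomEquiv K V (Module.Dual K V)).symm : _ ≃ₗ[K] _).toLinearMap

lemma bilinToExterior_eq_bteL (B : LinearMap.BilinForm K V) : bilinToExterior B = bteL B := rfl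

lemma bilinToExterior_dualTensorHom (f g : Module.Dual K V) :
    bilinToExterior ((dualTensorHom K V (Module.Dual K V)) (f ⊗ₜ[K] g))
      = ExteriorAlgebra.ι K f * ExteriorAlgebra.ι K g := by
  unfold bilinToExterior
  rw [show (dualTensorHomEquiv K V (Module.Dual K V)).symm
        ((dualTensorHom K V (Module.Dual K V)) (f ⊗ₜ[K] g)) = f ⊗ₜ[K] g from
    (dualTensorHomEquiv K V (Module.Dual K V)).symm_apply_apply (f ⊗ₜ[K] g)]
  simp [TensorProduct.lift.tmul]

open ExteriorAlgebra in
lemma pow_ne_zero_of_decomp [CharZero K] (m : ℕ) (hm : 0 < m)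
    (hdim : Module.finrank K V = 2 * m) (Ω : LinearMap.BilinForm K V)
    (u : ℕ → Module.Dual K V)
    (hind : LinearIndependent K (fun i : Fin (2*m) => u i.val))
    (hΩ : Ω = ∑ k ∈ Finset.range m,
      ((dualTensorHom K V (Module.Dual K V)) (u (2*k) ⊗ₜ[K] u (2*k+1))
        - (dualTensorHom K V (Module.Dual K V)) (u (2*k+1) ⊗ₜ[K] u (2*k)))) :
    bilinToExterior Ω ^ m ≠ 0 := by
  classical
  set x : ℕ → ExteriorAlgebra K (Module.Dual K V) :=
    fun k => ι K (u (2*k)) * ι K (u (2*k+1)) with hx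
  set L : List (ExteriorAlgebra K (Module.Dual K V)) := (List.range m).map x with hL
  have hc : ∀ p ∈ L, ∀ q ∈ L, Commute p q := by
    intro p hp q hq
    obtain ⟨a, -, rfl⟩ := List.mem_map.mp hp
    obtain ⟨b, -, rfl⟩ := List.mem_map.mp hq
    exact ι_pair_commute _ _ _ _
  have hs : ∀ p ∈ L, p * p = 0 := by
    intro p hp
    obtain ⟨a, -, rfl⟩ := List.mem_map.mp hp
    exact ι_pair_sq _ _
  have h1 : bilinToExterior Ω = ∑ k ∈ Finset.range m, 2 • x k := by
    rw [hΩ, bilinToExterior_eq_bteL, map_sum]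
    refine Finset.sum_congr rfl fun k _ => ?_
    have e1 := map_sub bteL ((dualTensorHom K V (Module.Dual K V)) (u (2*k) ⊗ₜ[K] u (2*k+1)))
      ((dualTensorHom K V (Module.Dual K V)) (u (2*k+1) ⊗ₜ[K] u (2*k)))
    rw [e1, ← bilinToExterior_eq_bteL, ← bilinToExterior_eq_bteL,
      bilinToExterior_dualTensorHom, bilinToExterior_dualTensorHom,
      ι_anticomm (u (2*k+1)) (u (2*k)), sub_neg_eq_add, hx, two_smul]
  have h2 : (∑ k ∈ Finset.range m, x k) = L.sum := by
    rw [hL, ← finset_range_sum_eq_list]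
  have h3 : L.prod = ιMulti K (2*m) (fun i : Fin (2*m) => u i.val) := by
    rw [ιMulti_apply, hL, hx]
    exact list_prod_pairs (fun n => ι K (u n)) m
  have hval : bilinToExterior Ω ^ m = (2^m * m.factorial) •
      ιMulti K (2*m) (fun i : Fin (2*m) => u i.val) := by
    rw [h1, ← Finset.smul_sum, smul_pow, h2, ← h3]
    have hlen : L.length = m := by simp [hL]
    rw [show L.sum ^ m = L.sum ^ L.length by rw [hlen],
      list_sum_pow_length L hc hs, hlen, smul_smul]
  -- build basis
  have hne : Nonempty (Fin (2*m)) := ⟨⟨0, by omega⟩⟩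
  have hcard : Fintype.card (Fin (2*m)) = Module.finrank K (Module.Dual K V) := by
    simp [Subspace.dual_finrank_eq, hdim]
  set Bas := basisOfLinearIndependentOfCardEqFinrank hind hcard with hBasdef
  have hBas : ⇑Bas = (fun i : Fin (2*m) => u i.val) :=
    coe_basisOfLinearIndependentOfCardEqFinrank _ _
  intro hzero
  rw [hval] at hzero
  set F : ∀ i, Module.Dual K V [⋀^Fin i]→ₗ[K] K :=
    Function.update (fun i => (0 : Module.Dual K V [⋀^Fin i]→ₗ[K] K)) (2*m) Bas.det with hF
  have := congrArg (liftAlternating (R := K) F) hzero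
  rw [map_nsmul, map_zero, liftAlternating_apply_ιMulti] at this
  have hF2 : F (2*m) = Bas.det := by rw [hF, Function.update_self]
  rw [hF2, ← hBas, Module.Basis.det_self, nsmul_eq_mul, mul_one] at this
  have : ((2^m * m.factorial : ℕ) : K) = 0 := by exact_mod_cast this
  rw [Nat.cast_eq_zero] at this
  exact (by positivity : 0 < 2^m * m.factorial).ne' this
end BTE1

variable {K V : Type*} in
open ExteriorAlgebra Module in
lemma symm_eq_sum [Field K] [AddCommGroup V] [Module K V] [FiniteDimensional K V]
    (Ω : LinearMap.BilinForm K V) (c : Basis (Fin (Module.finrank K V)) K V) :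
    (dualTensorHomEquiv K V (Module.Dual K V)).symm Ω
      = ∑ i, c.dualBasis i ⊗ₜ[K] Ω (c i) := by
  rw [LinearEquiv.symm_apply_eq]
  refine c.ext fun j => ?_
  simp [dualTensorHomEquiv, dualTensorHom_apply, Basis.dualBasis_apply_self, ite_smul,
    Finsupp.single_apply, Finset.sum_ite_eq]

section Deg
variable {K V : Type*} [Field K] [AddCommGroup V] [Module K V] [FiniteDimensional K V]
open ExteriorAlgebra Module Pointwise

lemma bilinToExterior_eq_sum (Ω : LinearMap.BilinForm K V)
    (c : Basis (Fin (Module.finrank K V)) K V) :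
    bilinToExterior Ω = ∑ i, ι K (c.dualBasis i) * ι K (Ω (c i)) := by
  unfold bilinToExterior
  rw [symm_eq_sum Ω c, map_sum]
  simp [TensorProduct.lift.tmul]

lemma pow_eq_zero_of_degenerate (m : ℕ) (hm : 0 < m)
    (hdim : Module.finrank K V = 2 * m) (Ω : LinearMap.BilinForm K V)
    (halt : Ω.IsAlt) (hdeg : ¬ Ω.Nondegenerate) : bilinToExterior Ω ^ m = 0 := by
  classical
  rw [LinearMap.BilinForm.Nondegenerate, LinearMap.IsRefl.nondegenerate_iff_separatingLeft halt.isRefl, LinearMap.SeparatingLeft] at hdeg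
  push_neg at hdeg
  obtain ⟨v, hv, hv0⟩ := hdeg
  obtain ⟨ψ₀, hψ₀⟩ : ∃ ψ₀ : Module.Dual K V, ψ₀ v = 1 := by
    obtain ⟨ψ, hψ⟩ : ∃ ψ : Module.Dual K V, ψ v ≠ 0 := by
      by_contra h
      push_neg at h
      exact hv0 ((Module.forall_dual_apply_eq_zero_iff K v).mp h)
    exact ⟨(ψ v)⁻¹ • ψ, by simp [inv_mul_cancel₀ hψ]⟩
  set M : Submodule K (Module.Dual K V) := LinearMap.ker (Module.Dual.eval K V v) with hM
  have hmemM : ∀ φ : Module.Dual K V, φ v = 0 → φ ∈ M := by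
    intro φ h; simp [hM, LinearMap.mem_ker, h]
  set N : Submodule K (ExteriorAlgebra K (Module.Dual K V)) :=
    Submodule.map (ι K : Module.Dual K V →ₗ[K] _) M with hN
  set c : Basis (Fin (Module.finrank K V)) K V := Module.finBasis K V with hc
  set d := c.dualBasis with hd
  set μ : Fin (Module.finrank K V) → Module.Dual K V := fun i => d i - (d i v) • ψ₀ with hμ
  have hμM : ∀ i, μ i ∈ M := fun i => hmemM _ (by simp [hμ, hψ₀, mul_comm])
  have hΩM : ∀ i, Ω (c i) ∈ M := fun i => hmemM _ (halt.isRefl v (c i) (hv (c i)))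
  have hΩv : Ω v = 0 := LinearMap.ext hv
  have key : ∀ i, ι K (d i) * ι K (Ω (c i))
      = ι K (μ i) * ι K (Ω (c i)) + (d i v) • (ι K ψ₀ * ι K (Ω (c i))) := by
    intro i
    have h2 : ι K (d i) = ι K (μ i) + (d i v) • ι K ψ₀ := by
      simp only [hμ, map_sub, map_smul]
      abel
    rw [h2, add_mul, smul_mul_assoc]
  have hsum : (∑ i, (d i v) • c i) = v := by
    rw [hd]
    simp only [Basis.coe_dualBasis, Basis.coord_apply]
    exact c.sum_repr v
  have hsplit : bilinToExterior Ω = ∑ i, ι K (μ i) * ι K (Ω (c i)) := by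
    rw [bilinToExterior_eq_sum Ω c, ← hd,
      Finset.sum_congr rfl (fun i _ => key i), Finset.sum_add_distrib]
    have h3 : ∑ i, (d i v) • (ι K ψ₀ * ι K (Ω (c i))) = 0 := by
      have h4 : ∀ i, (d i v) • (ι K ψ₀ * ι K (Ω (c i)))
          = ι K ψ₀ * ι K (Ω ((d i v) • c i)) := by
        intro i
        rw [map_smul, map_smul, mul_smul_comm]
      rw [Finset.sum_congr rfl (fun i _ => h4 i), ← Finset.mul_sum, ← map_sum, ← map_sum,
        hsum, hΩv, map_zero, mul_zero]
    rw [h3, add_zero]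
  have hmem2 : bilinToExterior Ω ∈ N * N := by
    rw [hsplit]
    exact Submodule.sum_mem _ fun i _ =>
      Submodule.mul_mem_mul (Submodule.mem_map_of_mem (hμM i))
        (Submodule.mem_map_of_mem (hΩM i))
  have hpow : bilinToExterior Ω ^ m ∈ N ^ (2 * m) := by
    have : bilinToExterior Ω ^ m ∈ (N * N) ^ m := Submodule.pow_mem_pow _ hmem2 m
    rwa [← pow_two, ← pow_mul] at this
  -- N ^ (2m) = ⊥
  have hMne : M ≠ ⊤ := by
    intro h
    have : ψ₀ ∈ M := h ▸ Submodule.mem_top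
    rw [hM, LinearMap.mem_ker] at this
    simp only [Module.Dual.eval_apply] at this
    rw [hψ₀] at this
    exact one_ne_zero this
  have hfr : Module.finrank K M < 2 * m := by
    rw [← hdim, ← Subspace.dual_finrank_eq (K := K) (V := V)]
    exact Submodule.finrank_lt hMne
  have hNbot : (N : Set (ExteriorAlgebra K (Module.Dual K V))) ^ (2*m) ⊆ {0} := by
    intro a ha
    rw [Set.mem_pow] at ha
    obtain ⟨f, hf⟩ := ha
    choose w hwM hwι using fun i => (Submodule.mem_map.mp (f i).2)
    have : a = ιMulti K (2*m) w := by
      rw [← hf, ιMulti_apply]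
      exact congrArg List.prod (congrArg List.ofFn (funext fun i => (hwι i).symm))
    rw [this]
    have hdep : ¬ LinearIndependent K w := by
      intro hind
      have h1 : Module.finrank K (Submodule.span K (Set.range w)) = 2 * m := by
        rw [finrank_span_eq_card hind, Fintype.card_fin]
      have h2 : Submodule.span K (Set.range w) ≤ M :=
        Submodule.span_le.mpr (by rintro _ ⟨i, rfl⟩; exact hwM i)
      have := Submodule.finrank_mono h2
      omega
    simp [AlternatingMap.map_linearDependent _ _ hdep]
  have hbot : N ^ (2*m) = ⊥ := by
    rw [eq_bot_iff, Submodule.pow_eq_span_pow_set, Submodule.span_le]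
    intro a ha
    have := hNbot ha
    simp only [Set.mem_singleton_iff] at this
    simp [this]
  rw [hbot] at hpow
  simpa using hpow

end Deg

section Symp
universe u

variable {K : Type*} [Field K]

open Module LinearMap LinearMap.BilinForm

lemma exists_symp_decomp :
    ∀ (m : ℕ) (V : Type u) [AddCommGroup V] [Module K V] [FiniteDimensional K V]
      (hdim : Module.finrank K V = 2 * m) (Ω : LinearMap.BilinForm K V)
      (_halt : Ω.IsAlt) (_hnd : Ω.Nondegenerate),
    ∃ u : ℕ → Module.Dual K V,
      LinearIndependent K (fun i : Fin (2*m) => u i.val) ∧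
      Ω = ∑ k ∈ Finset.range m,
        ((dualTensorHom K V (Module.Dual K V)) (u (2*k) ⊗ₜ[K] u (2*k+1))
          - (dualTensorHom K V (Module.Dual K V)) (u (2*k+1) ⊗ₜ[K] u (2*k))) := by
  intro m
  induction m with
  | zero =>
    intro V _ _ _ hdim Ω halt hnd
    haveI : Subsingleton V := by
      rw [← Module.finrank_zero_iff (R := K)]
      omega
    refine ⟨fun _ => 0, ?_, ?_⟩
    · haveI : IsEmpty (Fin (2*0)) := ⟨fun i => absurd i.2 (by omega)⟩
      exact linearIndependent_empty_type
    · rw [Finset.range_zero, Finset.sum_empty]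
      exact LinearMap.ext fun x => by simp [Subsingleton.elim x 0]
  | succ m ih =>
    intro V _ _ _ hdim Ω halt hnd
    haveI : Nontrivial V := by
      rw [← Module.finrank_pos_iff (R := K)]
      omega
    obtain ⟨e, he0⟩ := exists_ne (0 : V)
    obtain ⟨f₀, hf₀⟩ : ∃ y, Ω e y ≠ 0 := by
      by_contra h
      push_neg at h
      exact he0 (hnd.1 e h)
    set f : V := (Ω e f₀)⁻¹ • f₀ with hfdef
    have hef : Ω e f = 1 := by
      rw [hfdef, map_smul, smul_eq_mul, inv_mul_cancel₀ hf₀]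
    have hfe : Ω f e = -1 := by
      rw [← LinearMap.IsAlt.neg halt e f, hef]
    set W : Submodule K V := Submodule.span K {e, f} with hW
    have heW : e ∈ W := Submodule.subset_span (by simp)
    have hfW : f ∈ W := Submodule.subset_span (by simp)
    have hrefl : Ω.IsRefl := halt.isRefl
    -- restriction to W is nondegenerate
    have hres : (Ω.restrict W).Nondegenerate := by
      refine (LinearMap.IsRefl.nondegenerate_iff_separatingLeft (B := Ω.restrict W) (fun x y h => hrefl _ _ h)).mpr ?_
      rintro ⟨w, hw⟩ h
      obtain ⟨s, t, hst⟩ := Submodule.mem_span_pair.mp hw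
      have h1 : Ω w e = 0 := h ⟨e, heW⟩
      have h2 : Ω w f = 0 := h ⟨f, hfW⟩
      rw [← hst] at h1 h2
      simp only [map_add, LinearMap.add_apply, map_smul, LinearMap.smul_apply, smul_eq_mul,
        halt e, halt f, hef, hfe] at h1 h2
      have hs : s = 0 := by simpa using h2
      have ht : t = 0 := by simpa using h1
      refine Subtype.ext ?_
      simp only [Submodule.coe_zero, ← hst, hs, ht, zero_smul, add_zero]
    have hcompl : IsCompl W (Ω.orthogonal W) :=
      LinearMap.BilinForm.isCompl_orthogonal_of_restrict_nondegenerate hrefl hres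
    set O : Submodule K V := Ω.orthogonal W with hO
    have hWO : ∀ w ∈ W, ∀ z ∈ O, Ω w z = 0 := fun w hw z hz => hz w hw
    have hOW : ∀ w ∈ W, ∀ z ∈ O, Ω z w = 0 := fun w hw z hz => hrefl _ _ (hWO w hw z hz)
    have hWfr : Module.finrank K W = 2 := by
      have hind : LinearIndependent K ![e, f] := by
        rw [LinearIndependent.pair_iff]
        intro s t hst
        have h1 : Ω (s • e + t • f) e = 0 := by rw [hst, map_zero, LinearMap.zero_apply]
        have h2 : Ω (s • e + t • f) f = 0 := by rw [hst, map_zero, LinearMap.zero_apply]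
        simp only [map_add, LinearMap.add_apply, map_smul, LinearMap.smul_apply, smul_eq_mul,
          halt e, halt f, hef, hfe] at h1 h2
        exact ⟨by simpa using h2, by simpa using h1⟩
      have hr : Set.range ![e, f] = {e, f} := by
        ext z; simp only [Set.mem_range, Fin.exists_fin_two, Set.mem_insert_iff,
          Set.mem_singleton_iff, Matrix.cons_val_zero, Matrix.cons_val_one, Matrix.head_cons]; tauto
      have h3 := finrank_span_eq_card hind
      rw [hr] at h3
      rw [hW, h3, Fintype.card_fin]
    have hOfr : Module.finrank K O = 2 * m := by
      have h4 := Submodule.finrank_add_eq_of_isCompl hcompl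
      rw [hdim] at h4
      omega
    set Ω' : LinearMap.BilinForm K O := Ω.restrict O with hΩ'
    have halt' : Ω'.IsAlt := fun x => halt x
    have hsup : ∀ y : V, ∃ w ∈ W, ∃ z ∈ O, w + z = y := by
      intro y
      have : y ∈ W ⊔ O := by rw [hcompl.sup_eq_top]; trivial
      exact Submodule.mem_sup.mp this
    have hnd' : Ω'.Nondegenerate := by
      refine (LinearMap.IsRefl.nondegenerate_iff_separatingLeft (B := Ω') (fun x y h => hrefl _ _ h)).mpr ?_
      rintro ⟨x, hx⟩ h
      refine Subtype.ext (hnd.1 x fun y => ?_)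
      obtain ⟨w, hw, z, hz, rfl⟩ := hsup y
      have h1 : Ω x w = 0 := hrefl _ _ (hWO w hw x hx)
      have h2 : Ω x z = 0 := h ⟨z, hz⟩
      rw [map_add, h1, h2, add_zero]
    obtain ⟨u', hu'ind, hu'⟩ := ih O hOfr Ω' halt' hnd'
    set π : V →ₗ[K] O := Submodule.projectionOnto O W hcompl.symm with hπ
    have hπO : ∀ z : O, π ↑z = z := fun z =>
      Submodule.projectionOnto_apply_left hcompl.symm z
    have hπW : ∀ w ∈ W, π w = 0 := fun w hw =>
      Submodule.projectionOnto_apply_of_mem_right hcompl.symm hw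
    set u : ℕ → Module.Dual K V := fun n => match n with
      | 0 => -(Ω f)
      | 1 => Ω e
      | (k+2) => (u' k).comp π
      with hu
    have hu0 : u 0 = -(Ω f) := rfl
    have hu1 : u 1 = Ω e := rfl
    have hu2 : ∀ k, u (k+2) = (u' k).comp π := fun k => rfl
    have claim1 : ∀ x : V, x = ((u 0) x) • e + ((u 1) x) • f + ↑(π x) := by
      intro x
      have hxw : x - ↑(π x) ∈ W := by
        rw [← Submodule.ker_projectionOnto hcompl.symm, LinearMap.mem_ker, map_sub,
          hπO (π x), sub_self]
      obtain ⟨s, t, hst⟩ := Submodule.mem_span_pair.mp (hW ▸ hxw)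
      have hxdec : x = s • e + t • f + ↑(π x) := by
        rw [hst]; exact (sub_add_cancel x _).symm
      have hfx : Ω f x = -s := by
        conv_lhs => rw [hxdec]
        simp [halt f, hfe, hWO f hfW _ (π x).2]
      have hex : Ω e x = t := by
        conv_lhs => rw [hxdec]
        simp [halt e, hef, hWO e heW _ (π x).2]
      rw [hu0, hu1]
      simp only [LinearMap.neg_apply, hfx, hex, neg_neg]
      exact hxdec
    have key : ∀ x y : V, Ω x y
        = (u 0) x * (u 1) y - (u 1) x * (u 0) y + Ω ↑(π x) ↑(π y) := by
      intro x y
      have e1 : Ω x y = ((u 0) x) * Ω e y + ((u 1) x) * Ω f y + Ω ↑(π x) y := by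
        conv_lhs => rw [claim1 x]
        simp [smul_eq_mul]
      have e2 : Ω e y = (u 1) y := by
        conv_lhs => rw [claim1 y]
        rw [hu1]
        simp [halt e, hef, hWO e heW _ (π y).2]
      have e3 : Ω f y = -((u 0) y) := by
        conv_lhs => rw [claim1 y]
        rw [hu0]
        simp [halt f, hfe, hWO f hfW _ (π y).2]
      have e4 : Ω ↑(π x) y = Ω ↑(π x) ↑(π y) := by
        conv_lhs => rw [claim1 y]
        simp [hOW e heW _ (π x).2, hOW f hfW _ (π x).2]
      rw [e1, e2, e3, e4]; ring
    have hIHxy : ∀ x y : V, Ω ↑(π x) ↑(π y) = ∑ k ∈ Finset.range m,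
        ((u' (2*k)) (π x) * (u' (2*k+1)) (π y) - (u' (2*k+1)) (π x) * (u' (2*k)) (π y)) := by
      intro x y
      have h := LinearMap.congr_fun (LinearMap.congr_fun hu' (π x)) (π y)
      simpa [hΩ', LinearMap.sum_apply, dualTensorHom_apply, smul_eq_mul] using h
    refine ⟨u, ?_, ?_⟩
    · have hA : (fun i : Fin (2*(m+1)) => u i.val)
          = Fin.cons (u 0) (Fin.cons (u 1) (fun i : Fin (2*m) => (u' i.val).comp π)) := by
        funext i
        refine Fin.cases rfl (fun j => ?_) i
        refine Fin.cases rfl (fun j' => ?_) j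
        simp only [Fin.cons_succ]
        rfl
      rw [hA]
      have hπsurj : Function.Surjective π := fun z => ⟨↑z, hπO z⟩
      have hinner : LinearIndependent K (fun i : Fin (2*m) => (u' i.val).comp π) := by
        have h5 := hu'ind.map' π.dualMap (LinearMap.ker_eq_bot.mpr
          (LinearMap.dualMap_injective_of_surjective hπsurj))
        have h6 : (fun i : Fin (2*m) => (u' i.val).comp π)
            = ⇑π.dualMap ∘ (fun i : Fin (2*m) => u' i.val) :=
          funext fun i => (LinearMap.dualMap_apply' _ _).symm
        rw [h6]
        exact h5
      refine linearIndependent_fin_cons.mpr ⟨linearIndependent_fin_cons.mpr ⟨hinner, ?_⟩, ?_⟩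
      · intro hmem
        have hle : Submodule.span K (Set.range (fun i : Fin (2*m) => (u' i.val).comp π))
            ≤ LinearMap.ker (Module.Dual.eval K V f) := by
          rw [Submodule.span_le]
          rintro _ ⟨i, rfl⟩
          simp [LinearMap.mem_ker, Module.Dual.eval_apply, hπW f hfW]
        have h6 := hle hmem
        rw [LinearMap.mem_ker] at h6
        rw [Module.Dual.eval_apply, hu1, hef] at h6
        exact one_ne_zero h6
      · intro hmem
        have hle : Submodule.span K (Set.range
              (Fin.cons (u 1) (fun i : Fin (2*m) => (u' i.val).comp π) : Fin (2*m+1) → _))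
            ≤ LinearMap.ker (Module.Dual.eval K V e) := by
          rw [Submodule.span_le]
          intro φ hφ
          rw [Fin.range_cons] at hφ
          rcases Set.mem_insert_iff.mp hφ with rfl | ⟨i, rfl⟩
          · simp [LinearMap.mem_ker, Module.Dual.eval_apply, hu1, halt e]
          · simp [LinearMap.mem_ker, Module.Dual.eval_apply, hπW e heW]
        have h7 := hle hmem
        rw [LinearMap.mem_ker, Module.Dual.eval_apply, hu0, LinearMap.neg_apply, hfe,
          neg_neg] at h7
        exact one_ne_zero h7
    · refine LinearMap.ext fun x => LinearMap.ext fun y => ?_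
      have hsum_apply : ∀ x y : V, (∑ k ∈ Finset.range (m+1),
          ((dualTensorHom K V (Module.Dual K V)) (u (2*k) ⊗ₜ[K] u (2*k+1))
            - (dualTensorHom K V (Module.Dual K V)) (u (2*k+1) ⊗ₜ[K] u (2*k)))) x y
          = ∑ k ∈ Finset.range (m+1),
            ((u (2*k)) x * (u (2*k+1)) y - (u (2*k+1)) x * (u (2*k)) y) := by
        intro x y
        simp [LinearMap.sum_apply, dualTensorHom_apply, smul_eq_mul]
      rw [hsum_apply, Finset.sum_range_succ']
      have hterm : ∀ k, (u (2*(k+1))) x * (u (2*(k+1)+1)) y - (u (2*(k+1)+1)) x * (u (2*(k+1))) y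
          = (u' (2*k)) (π x) * (u' (2*k+1)) (π y) - (u' (2*k+1)) (π x) * (u' (2*k)) (π y) := by
        intro k
        have ha : u (2*(k+1)) = (u' (2*k)).comp π := by
          rw [show 2*(k+1) = 2*k+2 by ring]
        have hb : u (2*(k+1)+1) = (u' (2*k+1)).comp π := by
          rw [show 2*(k+1)+1 = (2*k+1)+2 by ring]
        rw [ha, hb]; simp
      rw [Finset.sum_congr rfl (fun k _ => hterm k), key x y, hIHxy x y]
      simp only [Nat.mul_zero, Nat.zero_add]
      ring

end Symp

/-- Let `V` be a `2m`-dimensional vector space over a field `K` of characteristic 0 with an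
alternating bilinear form `Ω`, viewed as an element of `Λ²(V^*)` inside the exterior algebra
of `V^*`. Then `Ω` is nondegenerate if and only if its `m`-th wedge power `Ω^{∧m}` is
nonzero. -/
theorem stmt_14 {K V : Type*} [Field K] [CharZero K] [AddCommGroup V] [Module K V]
    [FiniteDimensional K V] (m : ℕ) (hdim : Module.finrank K V = 2 * m)
    (Ω : LinearMap.BilinForm K V) (halt : Ω.IsAlt) :
    Ω.Nondegenerate ↔ (bilinToExterior Ω) ^ m ≠ 0 := by
  constructor
  · intro hnd
    rcases Nat.eq_zero_or_pos m with rfl | hm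
    · rw [pow_zero]
      exact one_ne_zero
    · obtain ⟨u, hind, hΩeq⟩ := exists_symp_decomp m V hdim Ω halt hnd
      exact pow_ne_zero_of_decomp m hm hdim Ω u hind hΩeq
  · intro hne
    by_contra hdeg
    rcases Nat.eq_zero_or_pos m with rfl | hm
    · apply hdeg
      refine (LinearMap.IsRefl.nondegenerate_iff_separatingLeft halt.isRefl).mpr ?_
      intro x _
      haveI : Subsingleton V := by
        rw [← Module.finrank_zero_iff (R := K)]
        omega
      exact Subsingleton.elim x 0
    · exact hne (pow_eq_zero_of_degenerate m hm hdim Ω halt hdeg)
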